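/- For any positive integers n ≥ 1 and r_1, ..., r_n ≥ 2, the n-dimensional grid graph P_{r_1} × ⋯ × P_{r_n} (Cartesian product of paths) has edge metric dimension at most n. Specifically, the set S consisting of the all-zeros vertex together with the n-1 vertices having r_j - 1 in coordinate j (for 1 ≤ j ≤ n-1) and 0 elsewhere is an edge resolving set. -/

import Mathlib

open SimpleGraph Finset

/-- Distance from an edge (as an unordered pair) to a vertex: the minimum
of the distances from the two endpoints. -/
noncomputable def edgeVertexDist {V : Type*} (G : SimpleGraph V) (e : Sym2 V) (v : V) : ℕ :=
  Sym2.lift ⟨fun x y => min (G.dist x v) (G.dist y v), fun x y => by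
    simp [min_comm]⟩ e

/-- `S` is a resolving set for the vertices of `G`. -/
def IsResolvingSet {V : Type*} (G : SimpleGraph V) (S : Set V) : Prop :=
  ∀ u w : V, (∀ s ∈ S, G.dist u s = G.dist w s) → u = w

/-- `S` is a resolving set for the edges of `G`. -/
def IsEdgeResolvingSet {V : Type*} (G : SimpleGraph V) (S : Set V) : Prop :=
  ∀ e ∈ G.edgeSet, ∀ f ∈ G.edgeSet,
    (∀ s ∈ S, edgeVertexDist G e s = edgeVertexDist G f s) → e = f

/-- The metric dimension of `G`. -/
noncomputable def metricDim {V : Type*} (G : SimpleGraph V) : ℕ :=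
  sInf {k | ∃ S : Finset V, S.card = k ∧ IsResolvingSet G (S : Set V)}

/-- The edge metric dimension of `G`. -/
noncomputable def edgeMetricDim {V : Type*} (G : SimpleGraph V) : ℕ :=
  sInf {k | ∃ S : Finset V, S.card = k ∧ IsEdgeResolvingSet G (S : Set V)}

/-- The `n`-dimensional grid graph: vertices are integer points with
`0 ≤ x_i ≤ r_i - 1`, adjacent iff they differ by one in exactly one coordinate. -/
def gridGraph (n : ℕ) (r : Fin n → ℕ) : SimpleGraph (∀ i, Fin (r i)) where
  Adj x y := ∃ j, ((x j : ℕ) + 1 = (y j : ℕ) ∨ (y j : ℕ) + 1 = (x j : ℕ)) ∧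
    ∀ i, i ≠ j → x i = y i
  symm := by
    constructor
    rintro x y ⟨j, h, hi⟩
    exact ⟨j, h.symm, fun i hij => (hi i hij).symm⟩
  loopless := by
    constructor
    rintro x ⟨j, h, -⟩
    omega

namespace Grid

variable {n : ℕ} {r : Fin n → ℕ}

/-- L1 distance. -/
def D (x y : ∀ i, Fin (r i)) : ℕ :=
  ∑ i, (((x i : ℕ) - (y i : ℕ)) + ((y i : ℕ) - (x i : ℕ)))

lemma D_eq_zero {x y : ∀ i, Fin (r i)} (h : D x y = 0) : x = y := by
  funext i
  have := Finset.sum_eq_zero_iff.mp h i (Finset.mem_univ i)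
  exact Fin.ext (by omega)

lemma D_adj_le {x x' y : ∀ i, Fin (r i)} (h : (gridGraph n r).Adj x x') :
    D x y ≤ D x' y + 1 := by
  obtain ⟨j, hj, hi⟩ := h
  have h1 : D x y = (((x j : ℕ) - (y j : ℕ)) + ((y j : ℕ) - (x j : ℕ)))
      + ∑ i ∈ Finset.univ.erase j, (((x i : ℕ) - (y i : ℕ)) + ((y i : ℕ) - (x i : ℕ))) := by
    rw [D, ← Finset.sum_erase_add _ _ (Finset.mem_univ j)]; ring
  have h2 : D x' y = (((x' j : ℕ) - (y j : ℕ)) + ((y j : ℕ) - (x' j : ℕ)))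
      + ∑ i ∈ Finset.univ.erase j, (((x' i : ℕ) - (y i : ℕ)) + ((y i : ℕ) - (x' i : ℕ))) := by
    rw [D, ← Finset.sum_erase_add _ _ (Finset.mem_univ j)]; ring
  have hrest : ∑ i ∈ Finset.univ.erase j, (((x i : ℕ) - (y i : ℕ)) + ((y i : ℕ) - (x i : ℕ)))
      = ∑ i ∈ Finset.univ.erase j, (((x' i : ℕ) - (y i : ℕ)) + ((y i : ℕ) - (x' i : ℕ))) := by
    apply Finset.sum_congr rfl
    intro i hi'
    rw [hi i (Finset.ne_of_mem_erase hi')]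
  omega

lemma exists_walk (x y : ∀ i, Fin (r i)) :
    ∃ w : (gridGraph n r).Walk x y, w.length = D x y := by
  generalize hm : D x y = m
  induction m generalizing x with
  | zero =>
    obtain rfl := D_eq_zero hm
    exact ⟨SimpleGraph.Walk.nil, by simp⟩
  | succ m ih =>
    have hne : x ≠ y := by
      intro h; subst h; simp [D] at hm
    have : ∃ j, x j ≠ y j := by
      by_contra hc
      push_neg at hc
      exact hne (funext hc)
    obtain ⟨j, hj⟩ := this
    have hj' : (x j : ℕ) ≠ (y j : ℕ) := fun h => hj (Fin.ext h)
    set v : Fin (r j) := if h : (x j : ℕ) < (y j : ℕ) then ⟨(x j : ℕ) + 1, by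
        have := (y j).isLt; omega⟩
      else ⟨(x j : ℕ) - 1, by have := (x j).isLt; omega⟩ with hv
    set x' := Function.update x j v with hx'
    have hvj : (x' j : ℕ) = if (x j : ℕ) < (y j : ℕ) then (x j : ℕ) + 1 else (x j : ℕ) - 1 := by
      rw [hx', Function.update_self, hv]
      split_ifs with h <;> rfl
    have hadj : (gridGraph n r).Adj x x' := by
      refine ⟨j, ?_, fun i hij => (Function.update_of_ne hij v x).symm⟩
      rw [hvj]; split_ifs <;> omega
    have hD : D x' y = m := by
      have h1 : D x y = (((x j : ℕ) - (y j : ℕ)) + ((y j : ℕ) - (x j : ℕ)))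
          + ∑ i ∈ Finset.univ.erase j, (((x i : ℕ) - (y i : ℕ)) + ((y i : ℕ) - (x i : ℕ))) := by
        rw [D, ← Finset.sum_erase_add _ _ (Finset.mem_univ j)]; ring
      have h2 : D x' y = (((x' j : ℕ) - (y j : ℕ)) + ((y j : ℕ) - (x' j : ℕ)))
          + ∑ i ∈ Finset.univ.erase j, (((x' i : ℕ) - (y i : ℕ)) + ((y i : ℕ) - (x' i : ℕ))) := by
        rw [D, ← Finset.sum_erase_add _ _ (Finset.mem_univ j)]; ring
      have hrest : ∑ i ∈ Finset.univ.erase j, (((x' i : ℕ) - (y i : ℕ)) + ((y i : ℕ) - (x' i : ℕ)))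
          = ∑ i ∈ Finset.univ.erase j, (((x i : ℕ) - (y i : ℕ)) + ((y i : ℕ) - (x i : ℕ))) := by
        apply Finset.sum_congr rfl
        intro i hi'
        rw [hx', Function.update_of_ne (Finset.ne_of_mem_erase hi')]
      rw [h2, hrest]
      rw [h1] at hm
      rw [hvj]
      split_ifs <;> omega
    obtain ⟨w, hw⟩ := ih x' hD
    exact ⟨SimpleGraph.Walk.cons hadj w, by simp [hw]⟩

lemma D_le_walk {x y : ∀ i, Fin (r i)} (w : (gridGraph n r).Walk x y) :
    D x y ≤ w.length := by
  induction w with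
  | nil => simp [D]
  | cons h p ih =>
    calc D _ _ ≤ D _ _ + 1 := D_adj_le h
    _ ≤ p.length + 1 := by omega
    _ = _ := by simp

lemma dist_eq (x y : ∀ i, Fin (r i)) : (gridGraph n r).dist x y = D x y := by
  obtain ⟨w, hw⟩ := exists_walk x y
  have h1 : (gridGraph n r).dist x y ≤ D x y := hw ▸ SimpleGraph.dist_le w
  have h2 : D x y ≤ (gridGraph n r).dist x y := by
    obtain ⟨p, hp⟩ := (SimpleGraph.Reachable.exists_walk_length_eq_dist ⟨w⟩)
    exact hp ▸ D_le_walk p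
  omega

lemma dist_z0' (hr : ∀ i, 2 ≤ r i) (x : ∀ i, Fin (r i)) (y : ∀ i, Fin (r i))
    (hy : y = fun i => ⟨0, Nat.lt_of_lt_of_le (by decide) (hr i)⟩) :
    (gridGraph n r).dist x y = ∑ i, (x i : ℕ) := by
  subst hy
  rw [dist_eq]
  unfold D
  simp

lemma dist_sj' (hr : ∀ i, 2 ≤ r i) (x : ∀ i, Fin (r i)) (j : Fin n) (y : ∀ i, Fin (r i))
    (hy : y = fun i => if i = j then (⟨r i - 1, Nat.sub_lt (Nat.lt_of_lt_of_le (by decide) (hr i)) Nat.one_pos⟩ : Fin (r i))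
      else ⟨0, Nat.lt_of_lt_of_le (by decide) (hr i)⟩) :
    (gridGraph n r).dist x y + (x j : ℕ) + (x j : ℕ) = (∑ i, (x i : ℕ)) + (r j - 1) := by
  subst hy
  rw [dist_eq]
  have hxj := (x j).isLt
  have hD : D x (fun i => if i = j then (⟨r i - 1, Nat.sub_lt (Nat.lt_of_lt_of_le (by decide) (hr i)) Nat.one_pos⟩ : Fin (r i))
        else ⟨0, Nat.lt_of_lt_of_le (by decide) (hr i)⟩)
      = (((x j : ℕ) - (r j - 1)) + ((r j - 1) - (x j : ℕ)))
      + ∑ i ∈ Finset.univ.erase j, (x i : ℕ) := by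
    rw [D, ← Finset.sum_erase_add _ _ (Finset.mem_univ j)]
    have : (∑ i ∈ Finset.univ.erase j, (((x i : ℕ) -
          ((if i = j then (⟨r i - 1, Nat.sub_lt (Nat.lt_of_lt_of_le (by decide) (hr i)) Nat.one_pos⟩ : Fin (r i))
            else ⟨0, Nat.lt_of_lt_of_le (by decide) (hr i)⟩) : Fin (r i)).1)
        + ((((if i = j then (⟨r i - 1, Nat.sub_lt (Nat.lt_of_lt_of_le (by decide) (hr i)) Nat.one_pos⟩ : Fin (r i))
            else ⟨0, Nat.lt_of_lt_of_le (by decide) (hr i)⟩) : Fin (r i)).1) - (x i : ℕ))))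
        = ∑ i ∈ Finset.univ.erase j, (x i : ℕ) := by
      apply Finset.sum_congr rfl
      intro i hi
      simp [Finset.ne_of_mem_erase hi]
    rw [this]
    simp
    omega
  have hs : ∑ i, (x i : ℕ) = (x j : ℕ) + ∑ i ∈ Finset.univ.erase j, (x i : ℕ) := by
    rw [← Finset.sum_erase_add _ _ (Finset.mem_univ j)]; ring
  have := hr j
  omega

lemma edge_rep {e : Sym2 (∀ i, Fin (r i))} (he : e ∈ (gridGraph n r).edgeSet) :
    ∃ x y : (∀ i, Fin (r i)), ∃ k : Fin n, e = s(x, y) ∧ (x k : ℕ) + 1 = (y k : ℕ) ∧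
      ∀ i, i ≠ k → x i = y i := by
  induction e with
  | _ a b =>
    rw [SimpleGraph.mem_edgeSet] at he
    obtain ⟨j, hj | hj, hi⟩ := he
    · exact ⟨a, b, j, rfl, hj, hi⟩
    · exact ⟨b, a, j, Sym2.eq_swap, hj, fun i h => (hi i h).symm⟩

lemma sum_succ {x y : ∀ i, Fin (r i)} {k : Fin n} (hk : (x k : ℕ) + 1 = (y k : ℕ))
    (hi : ∀ i, i ≠ k → x i = y i) :
    (∑ i, (y i : ℕ)) = (∑ i, (x i : ℕ)) + 1 := by
  have hx : ∑ i ∈ Finset.univ.erase k, (x i : ℕ) + (x k : ℕ) = ∑ i, (x i : ℕ) :=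
    Finset.sum_erase_add _ _ (Finset.mem_univ k)
  have hy : ∑ i ∈ Finset.univ.erase k, (y i : ℕ) + (y k : ℕ) = ∑ i, (y i : ℕ) :=
    Finset.sum_erase_add _ _ (Finset.mem_univ k)
  have : ∑ i ∈ Finset.univ.erase k, (y i : ℕ) = ∑ i ∈ Finset.univ.erase k, (x i : ℕ) :=
    Finset.sum_congr rfl fun i hi' => by rw [hi i (Finset.ne_of_mem_erase hi')]
  omega

lemma edist_z0 (hr : ∀ i, 2 ≤ r i) {x y : ∀ i, Fin (r i)} {k : Fin n}
    (hk : (x k : ℕ) + 1 = (y k : ℕ)) (hi : ∀ i, i ≠ k → x i = y i)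
    (z : ∀ i, Fin (r i)) (hz : z = fun i => ⟨0, Nat.lt_of_lt_of_le (by decide) (hr i)⟩) :
    edgeVertexDist (gridGraph n r) s(x, y) z = ∑ i, (x i : ℕ) := by
  have h1 := dist_z0' hr x z hz
  have h2 := dist_z0' hr y z hz
  have h3 := sum_succ hk hi
  simp only [edgeVertexDist, Sym2.lift_mk]
  omega

lemma edist_sj (hr : ∀ i, 2 ≤ r i) {x y : ∀ i, Fin (r i)} {k : Fin n}
    (hk : (x k : ℕ) + 1 = (y k : ℕ)) (hi : ∀ i, i ≠ k → x i = y i)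
    (j : Fin n) (z : ∀ i, Fin (r i))
    (hz : z = fun i => if i = j then (⟨r i - 1, Nat.sub_lt (Nat.lt_of_lt_of_le (by decide) (hr i)) Nat.one_pos⟩ : Fin (r i))
      else ⟨0, Nat.lt_of_lt_of_le (by decide) (hr i)⟩) :
    edgeVertexDist (gridGraph n r) s(x, y) z + (x j : ℕ) + (x j : ℕ)
      + (if j = k then 1 else 0) = (∑ i, (x i : ℕ)) + (r j - 1) := by
  have h1 := dist_sj' hr x j z hz
  have h2 := dist_sj' hr y j z hz
  have h3 := sum_succ hk hi
  simp only [edgeVertexDist, Sym2.lift_mk]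
  by_cases hjk : j = k
  · subst hjk
    rw [if_pos rfl]
    omega
  · rw [if_neg hjk]
    have h4 := hi j hjk
    have h5 : (x j : ℕ) = (y j : ℕ) := by rw [h4]
    omega

end Grid

theorem stmt_16 (n : ℕ) (hn : 1 ≤ n) (r : Fin n → ℕ) (hr : ∀ i, 2 ≤ r i) :
    edgeMetricDim (gridGraph n r) ≤ n ∧
    IsEdgeResolvingSet (gridGraph n r)
      (({fun i => ⟨0, by have := hr i; omega⟩} ∪
        {v | ∃ j : Fin n, (j : ℕ) < n - 1 ∧
          v = fun i => if i = j then (⟨r i - 1, by have := hr i; omega⟩ : Fin (r i))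
            else ⟨0, by have := hr i; omega⟩}) : Set (∀ i, Fin (r i))) := by
  classical
  set S : Set (∀ i, Fin (r i)) :=
    ({fun i => ⟨0, by have := hr i; omega⟩} ∪
      {v | ∃ j : Fin n, (j : ℕ) < n - 1 ∧
        v = fun i => if i = j then (⟨r i - 1, by have := hr i; omega⟩ : Fin (r i))
          else ⟨0, by have := hr i; omega⟩}) with hSdef
  have key : IsEdgeResolvingSet (gridGraph n r) S := by
    intro e he f hf hdist
    obtain ⟨x, y, k, rfl, hk, hik⟩ := Grid.edge_rep he
    obtain ⟨u, w, k', rfl, hk', hik'⟩ := Grid.edge_rep hf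
    have hz0mem : (fun i => (⟨0, by have := hr i; omega⟩ : Fin (r i))) ∈ S :=
      Set.mem_union_left _ rfl
    have hz := hdist _ hz0mem
    rw [Grid.edist_z0 hr hk hik _ rfl, Grid.edist_z0 hr hk' hik' _ rfl] at hz
    have hj : ∀ j : Fin n, (j : ℕ) < n - 1 → (x j : ℕ) = (u j : ℕ) ∧ ((j = k) ↔ (j = k')) := by
      intro j hjlt
      have hmem : (fun i => if i = j then (⟨r i - 1, by have := hr i; omega⟩ : Fin (r i))
          else ⟨0, by have := hr i; omega⟩) ∈ S := Set.mem_union_right _ ⟨j, hjlt, rfl⟩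
      have h := hdist _ hmem
      have h1 := Grid.edist_sj hr hk hik j _ rfl
      have h2 := Grid.edist_sj hr hk' hik' j _ rfl
      rw [h] at h1
      set b : ℕ := if j = k then 1 else 0 with hbdef
      set b' : ℕ := if j = k' then 1 else 0 with hbdef'
      have hb : b = 0 ∨ b = 1 := by rw [hbdef]; split_ifs <;> simp
      have hb' : b' = 0 ∨ b' = 1 := by rw [hbdef']; split_ifs <;> simp
      have hbeq : b = b' ∧ (x j : ℕ) = (u j : ℕ) := by omega
      refine ⟨hbeq.2, ?_, ?_⟩
      · intro hjk
        have e1 : b = 1 := by simp [hbdef, hjk]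
        have e2 : b' = 1 := by omega
        by_contra hne
        simp [hbdef', hne] at e2
      · intro hjk
        have e1 : b' = 1 := by simp [hbdef', hjk]
        have e2 : b = 1 := by omega
        by_contra hne
        simp [hbdef, hne] at e2
    have hkk' : k = k' := by
      by_cases hlt : (k : ℕ) < n - 1
      · exact (hj k hlt).2.mp rfl
      · by_cases hlt' : (k' : ℕ) < n - 1
        · exact ((hj k' hlt').2.mpr rfl).symm
        · have h1 := k.isLt
          have h2 := k'.isLt
          exact Fin.ext (by omega)
    have hxu : x = u := by
      funext i
      by_cases hlt : (i : ℕ) < n - 1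
      · exact Fin.ext (hj i hlt).1
      · have hin : (i : ℕ) = n - 1 := by have := i.isLt; omega
        have hx : ∑ i' ∈ Finset.univ.erase i, (x i' : ℕ) + (x i : ℕ) = ∑ i', (x i' : ℕ) :=
          Finset.sum_erase_add _ _ (Finset.mem_univ i)
        have hu : ∑ i' ∈ Finset.univ.erase i, (u i' : ℕ) + (u i : ℕ) = ∑ i', (u i' : ℕ) :=
          Finset.sum_erase_add _ _ (Finset.mem_univ i)
        have hrest : ∑ i' ∈ Finset.univ.erase i, (x i' : ℕ)
            = ∑ i' ∈ Finset.univ.erase i, (u i' : ℕ) := by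
          apply Finset.sum_congr rfl
          intro i' hi'
          have hne := Finset.ne_of_mem_erase hi'
          have hlt' : (i' : ℕ) < n - 1 := by
            rcases lt_or_ge (i' : ℕ) (n - 1) with h | h
            · exact h
            · exact absurd (Fin.ext (by have := i'.isLt; omega) : i' = i) hne
          exact (hj i' hlt').1
        exact Fin.ext (by omega)
    have hyw : y = w := by
      funext i
      by_cases hik2 : i = k
      · subst hik2
        apply Fin.ext
        have hxui : (x i : ℕ) = (u i : ℕ) := by rw [hxu]
        rw [← hkk'] at hk'
        omega
      · have h1 := hik i hik2
        rw [hkk'] at hik2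
        have h2 := hik' i hik2
        rw [← h1, ← h2, hxu]
    rw [hxu, hyw]
  refine ⟨?_, key⟩
  set T : Finset (∀ i, Fin (r i)) :=
    {(fun i => (⟨0, by have := hr i; omega⟩ : Fin (r i)))} ∪
      (Finset.univ.filter (fun j : Fin n => (j : ℕ) < n - 1)).image
        (fun j => fun i => if i = j then (⟨r i - 1, by have := hr i; omega⟩ : Fin (r i))
          else ⟨0, by have := hr i; omega⟩) with hTdef
  have hST : S ⊆ (T : Set (∀ i, Fin (r i))) := by
    intro s hs
    rcases hs with hs | ⟨j, hjlt, rfl⟩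
    · rw [Set.mem_singleton_iff] at hs
      subst hs
      simp [hTdef]
    · rw [Finset.mem_coe, hTdef, Finset.mem_union]
      right
      rw [Finset.mem_image]
      exact ⟨j, Finset.mem_filter.mpr ⟨Finset.mem_univ j, hjlt⟩, rfl⟩
  have hTres : IsEdgeResolvingSet (gridGraph n r) (T : Set (∀ i, Fin (r i))) := by
    intro e he f hf hd
    exact key e he f hf fun s hs => hd s (hST hs)
  have h1 : edgeMetricDim (gridGraph n r) ≤ T.card :=
    Nat.sInf_le ⟨T, rfl, hTres⟩
  have h2 : T.card ≤ n := by
    have hc1 : T.card ≤ 1 + ((Finset.univ.filter (fun j : Fin n => (j : ℕ) < n - 1)).image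
        (fun j => fun i => if i = j then (⟨r i - 1, by have := hr i; omega⟩ : Fin (r i))
          else ⟨0, by have := hr i; omega⟩)).card := by
      rw [hTdef]
      calc _ ≤ _ := Finset.card_union_le _ _
      _ ≤ _ := by simp
    have hc2 : ((Finset.univ.filter (fun j : Fin n => (j : ℕ) < n - 1)).image
        (fun j => fun i => if i = j then (⟨r i - 1, by have := hr i; omega⟩ : Fin (r i))
          else ⟨0, by have := hr i; omega⟩)).card
        ≤ (Finset.univ.filter (fun j : Fin n => (j : ℕ) < n - 1)).card :=
      Finset.card_image_le
    have hc3 : (Finset.univ.filter (fun j : Fin n => (j : ℕ) < n - 1)).card ≤ n - 1 := by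
      have hsub : Finset.univ.filter (fun j : Fin n => (j : ℕ) < n - 1)
          ⊆ Finset.univ.erase (⟨n - 1, by omega⟩ : Fin n) := by
        intro j hjmem
        rw [Finset.mem_filter] at hjmem
        rw [Finset.mem_erase]
        refine ⟨?_, Finset.mem_univ j⟩
        intro hje
        rw [hje] at hjmem
        simp at hjmem
      calc _ ≤ _ := Finset.card_le_card hsub
      _ = n - 1 := by
        rw [Finset.card_erase_of_mem (Finset.mem_univ _)]
        simp
    omega
  omega
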